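/- arXiv:2303.05020 — 2 statements merged into one kernel-verified Lean document; each statement's English description precedes it below -/
import Mathlib

section
/- Fix d ≥ 1, μ > -1/2, θ > 0, c > 0, n ≥ 0 and β = sqrt(c + (n+d/2-1)² + μ(μ+d-2))/θ. For k ≥ 1 and α > -1, the radial function u(r) = r^{θβ+1-d/2-μ} P_k^{(α,β)}(2r^{2θ}-1) on (0,1) satisfies -r^{2μ}[u''(r) + ((2μ+d-1)/r) u'(r) - ((n(n+d-2)+c)/r²) u(r)] = -4θ²(k+β)(k+α+β+1) r^{2θ-2+2μ} · r^{θβ+1-d/2-μ} P_{k-1}^{(α+2,β)}(2r^{2θ}-1). -/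
open Real MeasureTheory Finset

noncomputable def jacobiP (n : ℕ) (a b : ℝ) (x : ℝ) : ℝ :=
  ∑ k ∈ Finset.range (n + 1),
    (ascPochhammer ℝ k).eval ((n : ℝ) + a + b + 1) *
      (ascPochhammer ℝ (n - k)).eval (a + (k : ℝ) + 1) /
      ((k.factorial : ℝ) * ((n - k).factorial : ℝ)) * ((x - 1) / 2) ^ k

section jacobiAux

open Polynomial


lemma asc_succ_left' (n : ℕ) (x : ℝ) :
    (ascPochhammer ℝ (n+1)).eval x = x * (ascPochhammer ℝ n).eval (x+1) := by
  rw [ascPochhammer_succ_left, eval_mul, eval_X, eval_comp, eval_add, eval_X, eval_one]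

noncomputable def jC (k : ℕ) (a b : ℝ) (j : ℕ) : ℝ :=
  (ascPochhammer ℝ j).eval ((k : ℝ) + a + b + 1) *
    (ascPochhammer ℝ (k - j)).eval (a + (j : ℝ) + 1) /
    ((j.factorial : ℝ) * ((k - j).factorial : ℝ))

lemma eval_congr_arg (p : Polynomial ℝ) {x y : ℝ} (h : x = y) : p.eval x = p.eval y := by rw [h]

-- middle coefficient identity, k = i+q+2
lemma coeff_mid (i q : ℕ) (a b : ℝ) :
    ((i:ℝ)+1) * ((i:ℝ)+b+1) * jC (i+q+2) a b (i+1)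
      + ((i:ℝ)+2) * ((i:ℝ)+1) * jC (i+q+2) a b (i+2)
    = (((i+q+2:ℕ):ℝ) + b) * (((i+q+2:ℕ):ℝ) + a + b + 1) * jC (i+q+1) (a+2) b i := by
  have e1 : (i+q+2) - (i+1) = q + 1 := by omega
  have e2 : (i+q+2) - (i+2) = q := by omega
  have e3 : (i+q+1) - i = q + 1 := by omega
  unfold jC
  rw [e1, e2, e3]
  push_cast
  have h1 : (ascPochhammer ℝ (i+1)).eval ((i:ℝ)+(q:ℝ)+2+a+b+1)
      = ((i:ℝ)+(q:ℝ)+a+b+3) * (ascPochhammer ℝ i).eval ((i:ℝ)+(q:ℝ)+a+b+4) := by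
    rw [eval_congr_arg _ (show (i:ℝ)+(q:ℝ)+2+a+b+1 = (i:ℝ)+(q:ℝ)+a+b+3 by ring),
        asc_succ_left' i, eval_congr_arg _ (show (i:ℝ)+(q:ℝ)+a+b+3+1 = (i:ℝ)+(q:ℝ)+a+b+4 by ring)]
  have h2 : (ascPochhammer ℝ (i+2)).eval ((i:ℝ)+(q:ℝ)+2+a+b+1)
      = ((i:ℝ)+(q:ℝ)+a+b+3) * ((ascPochhammer ℝ i).eval ((i:ℝ)+(q:ℝ)+a+b+4)
          * (((i:ℝ)+(q:ℝ)+a+b+4) + (i:ℝ))) := by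
    rw [eval_congr_arg _ (show (i:ℝ)+(q:ℝ)+2+a+b+1 = (i:ℝ)+(q:ℝ)+a+b+3 by ring),
        show i+2 = (i+1)+1 from rfl, asc_succ_left' (i+1),
        eval_congr_arg _ (show (i:ℝ)+(q:ℝ)+a+b+3+1 = (i:ℝ)+(q:ℝ)+a+b+4 by ring),
        ascPochhammer_succ_eval]
  have h3 : (ascPochhammer ℝ (q+1)).eval (a+((i:ℝ)+1)+1)
      = (a+(i:ℝ)+2) * (ascPochhammer ℝ q).eval (a+(i:ℝ)+3) := by
    rw [eval_congr_arg _ (show a+((i:ℝ)+1)+1 = a+(i:ℝ)+2 by ring),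
        asc_succ_left' q, eval_congr_arg _ (show a+(i:ℝ)+2+1 = a+(i:ℝ)+3 by ring)]
  have h4 : (ascPochhammer ℝ q).eval (a+((i:ℝ)+2)+1) = (ascPochhammer ℝ q).eval (a+(i:ℝ)+3) :=
    eval_congr_arg _ (by ring)
  have h5 : (ascPochhammer ℝ i).eval ((i:ℝ)+(q:ℝ)+1+(a+2)+b+1)
      = (ascPochhammer ℝ i).eval ((i:ℝ)+(q:ℝ)+a+b+4) := eval_congr_arg _ (by ring)
  have h6 : (ascPochhammer ℝ (q+1)).eval (a+2+(i:ℝ)+1)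
      = (ascPochhammer ℝ q).eval (a+(i:ℝ)+3) * ((a+(i:ℝ)+3) + (q:ℝ)) := by
    rw [eval_congr_arg _ (show a+2+(i:ℝ)+1 = a+(i:ℝ)+3 by ring), ascPochhammer_succ_eval]
  rw [h1, h2, h3, h4, h5, h6]
  have f1 : ((i+1).factorial : ℝ) = ((i:ℝ)+1) * i.factorial := by
    rw [Nat.factorial_succ]; push_cast; ring
  have f2 : ((i+2).factorial : ℝ) = ((i:ℝ)+2) * (((i:ℝ)+1) * i.factorial) := by
    rw [Nat.factorial_succ, Nat.factorial_succ]; push_cast; ring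
  have f3 : ((q+1).factorial : ℝ) = ((q:ℝ)+1) * q.factorial := by
    rw [Nat.factorial_succ]; push_cast; ring
  rw [f1, f3]
  rw [show i+1+1 = i+2 from rfl, f2]
  have hif : (i.factorial : ℝ) ≠ 0 := Nat.cast_ne_zero.2 i.factorial_ne_zero
  have hqf : (q.factorial : ℝ) ≠ 0 := Nat.cast_ne_zero.2 q.factorial_ne_zero
  have hi1 : ((i:ℝ)+1) ≠ 0 := by positivity
  have hi2 : ((i:ℝ)+2) ≠ 0 := by positivity
  have hq1 : ((q:ℝ)+1) ≠ 0 := by positivity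
  field_simp
  ring

-- last coefficient identity, k = p+1
lemma coeff_last (p : ℕ) (a b : ℝ) :
    (((p+1:ℕ):ℝ)) * (((p+1:ℕ):ℝ)+b) * jC (p+1) a b (p+1)
    = (((p+1:ℕ):ℝ) + b) * (((p+1:ℕ):ℝ) + a + b + 1) * jC p (a+2) b p := by
  unfold jC
  rw [Nat.sub_self, Nat.sub_self]
  push_cast
  have h1 : (ascPochhammer ℝ (p+1)).eval ((p:ℝ)+1+a+b+1)
      = ((p:ℝ)+1+a+b+1) * (ascPochhammer ℝ p).eval ((p:ℝ)+(a+2)+b+1) := by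
    rw [asc_succ_left' p, eval_congr_arg _ (show (p:ℝ)+1+a+b+1+1 = (p:ℝ)+(a+2)+b+1 by ring)]
  rw [h1]
  have f1 : ((p+1).factorial : ℝ) = ((p:ℝ)+1) * p.factorial := by
    rw [Nat.factorial_succ]; push_cast; ring
  rw [f1]
  have hpf : (p.factorial : ℝ) ≠ 0 := Nat.cast_ne_zero.2 p.factorial_ne_zero
  have hp1 : ((p:ℝ)+1) ≠ 0 := by positivity
  simp only [Nat.factorial_zero, Nat.cast_one, mul_one, ascPochhammer_zero, eval_one]
  field_simp

lemma jacobiP_eq (k : ℕ) (a b x : ℝ) :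
    jacobiP k a b x = ∑ j ∈ Finset.range (k+1), jC k a b j * ((x - 1)/2)^j := rfl

noncomputable def dJ (k : ℕ) (a b x : ℝ) : ℝ :=
  ∑ j ∈ Finset.range (k+1), jC k a b j * ((j:ℝ) * ((x-1)/2)^(j-1) * (1/2))

noncomputable def ddJ (k : ℕ) (a b x : ℝ) : ℝ :=
  ∑ j ∈ Finset.range (k+1),
    jC k a b j * (((j:ℝ) * ((((j-1:ℕ)):ℝ) * ((x-1)/2)^(j-1-1) * (1/2))) * (1/2))

lemma key (k : ℕ) (hk : 1 ≤ k) (a b x : ℝ) :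
    2*((1+x) * ddJ k a b x + (b+1) * dJ k a b x)
      = ((k:ℝ)+b)*((k:ℝ)+a+b+1) * jacobiP (k-1) (a+2) b x := by
  obtain ⟨K, rfl⟩ : ∃ K, k = K+1 := ⟨k-1, by omega⟩
  have L1 : 2*((1+x) * ddJ (K+1) a b x + (b+1) * dJ (K+1) a b x)
      = (∑ j ∈ Finset.range (K+2),
          jC (K+1) a b j * ((j:ℝ) * (((j-1:ℕ)):ℝ) + (b+1)*(j:ℝ)) * ((x-1)/2)^(j-1))
        + (∑ j ∈ Finset.range (K+2),
          jC (K+1) a b j * ((j:ℝ) * (((j-1:ℕ)):ℝ)) * ((x-1)/2)^(j-2)) := by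
    unfold ddJ dJ
    rw [Finset.mul_sum, Finset.mul_sum, ← Finset.sum_add_distrib, Finset.mul_sum,
      ← Finset.sum_add_distrib]
    refine Finset.sum_congr rfl fun j _ => ?_
    match j with
    | 0 => norm_num
    | 1 => norm_num; ring
    | (i+2) =>
      simp only [show i+2-1 = i+1 from rfl, show i+2-1-1 = i from rfl, show i+2-2 = i from rfl]
      push_cast
      rw [pow_succ]
      ring
  rw [L1]
  -- SG
  have SG : (∑ j ∈ Finset.range (K+2),
        jC (K+1) a b j * ((j:ℝ) * (((j-1:ℕ)):ℝ) + (b+1)*(j:ℝ)) * ((x-1)/2)^(j-1))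
      = ∑ i ∈ Finset.range (K+1), ((i:ℝ)+1)*((i:ℝ)+b+1) * jC (K+1) a b (i+1) * ((x-1)/2)^i := by
    rw [Finset.sum_range_succ']
    simp only [Nat.cast_zero, Nat.zero_sub, Nat.cast_ofNat, mul_zero, zero_mul, add_zero,
      Nat.add_sub_cancel]
    refine Finset.sum_congr rfl fun i _ => ?_
    push_cast
    ring
  -- SH
  have SH : (∑ j ∈ Finset.range (K+2),
        jC (K+1) a b j * ((j:ℝ) * (((j-1:ℕ)):ℝ)) * ((x-1)/2)^(j-2))
      = ∑ i ∈ Finset.range K, ((i:ℝ)+2)*((i:ℝ)+1) * jC (K+1) a b (i+2) * ((x-1)/2)^i := by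
    rw [Finset.sum_range_succ', Finset.sum_range_succ']
    simp only [show ∀ i:ℕ, i+1+1 = i+2 from fun _ => rfl,
      show ∀ i:ℕ, i+2-1 = i+1 from fun _ => rfl, show ∀ i:ℕ, i+2-2 = i from fun _ => rfl,
      show (1:ℕ)-1 = 0 from rfl, Nat.cast_zero, Nat.cast_one, mul_zero, zero_mul, add_zero,
      mul_one, one_mul]
    refine Finset.sum_congr rfl fun i _ => ?_
    push_cast
    ring
  rw [SG, SH]
  -- RHS
  rw [show (K+1)-1 = K from rfl, jacobiP_eq, Finset.mul_sum]
  rw [Finset.sum_range_succ, Finset.sum_range_succ]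
  have hlast : ((K:ℝ)+1)*((K:ℝ)+b+1) * jC (K+1) a b (K+1) * ((x-1)/2)^K
      = (((K+1:ℕ):ℝ)+b)*(((K+1:ℕ):ℝ)+a+b+1) * (jC K (a+2) b K * ((x-1)/2)^K) := by
    have := coeff_last K a b
    push_cast at this ⊢
    linear_combination ((x-1)/2)^K * this
  have hsum : ∑ i ∈ Finset.range K, (((i:ℝ)+1)*((i:ℝ)+b+1) * jC (K+1) a b (i+1) * ((x-1)/2)^i
        + ((i:ℝ)+2)*((i:ℝ)+1) * jC (K+1) a b (i+2) * ((x-1)/2)^i)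
      = ∑ i ∈ Finset.range K, (((K+1:ℕ):ℝ)+b)*(((K+1:ℕ):ℝ)+a+b+1) * (jC K (a+2) b i * ((x-1)/2)^i) := by
    refine Finset.sum_congr rfl fun i hi => ?_
    have hi' : i < K := Finset.mem_range.1 hi
    have h1 : i + (K-1-i) + 2 = K+1 := by omega
    have h2 : i + (K-1-i) + 1 = K := by omega
    have hm := coeff_mid i (K-1-i) a b
    rw [h1, h2] at hm
    push_cast at hm ⊢
    linear_combination ((x-1)/2)^i * hm
  rw [Finset.sum_add_distrib] at hsum
  push_cast at hsum hlast ⊢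
  linear_combination hsum + hlast

lemma hasDerivAt_jacobiP (k : ℕ) (a b x : ℝ) :
    HasDerivAt (fun x => jacobiP k a b x) (dJ k a b x) x := by
  have hf : HasDerivAt (fun x : ℝ => (x-1)/2) (1/2) x :=
    ((hasDerivAt_id x).sub_const 1).div_const 2
  exact HasDerivAt.fun_sum fun j _ => ((hf.pow j).const_mul _)

lemma hasDerivAt_dJ (k : ℕ) (a b x : ℝ) :
    HasDerivAt (fun x => dJ k a b x) (ddJ k a b x) x := by
  have hf : HasDerivAt (fun x : ℝ => (x-1)/2) (1/2) x :=
    ((hasDerivAt_id x).sub_const 1).div_const 2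
  exact HasDerivAt.fun_sum fun j _ =>
    ((((hf.pow (j-1)).const_mul ((j:ℝ))).mul_const (1/2)).const_mul (jC k a b j))


end jacobiAux

theorem stmt17 (d m t c : ℝ) (hd : 1 ≤ d) (hm : -1/2 < m) (ht : 0 < t) (hc : 0 < c)
    (n : ℕ)
    (b : ℝ) (hb : b = Real.sqrt (c + ((n : ℝ) + d / 2 - 1) ^ 2 + m * (m + d - 2)) / t)
    (k : ℕ) (hk : 1 ≤ k) (a : ℝ) (ha : -1 < a)
    (u : ℝ → ℝ)
    (hu : ∀ r ∈ Set.Ioo (0:ℝ) 1,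
      u r = r ^ (t * b + 1 - d / 2 - m) * jacobiP k a b (2 * r ^ (2 * t) - 1)) :
    ∀ r ∈ Set.Ioo (0:ℝ) 1,
      -(r ^ (2 * m)) * (deriv (deriv u) r + ((2 * m + d - 1) / r) * deriv u r -
          (((n : ℝ) * ((n : ℝ) + d - 2) + c) / r ^ 2) * u r) =
        -4 * t ^ 2 * ((k : ℝ) + b) * ((k : ℝ) + a + b + 1) * r ^ (2 * t - 2 + 2 * m) *
          (r ^ (t * b + 1 - d / 2 - m) * jacobiP (k - 1) (a + 2) b (2 * r ^ (2 * t) - 1)) := by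
  -- abbreviations
  have hbR : t * b = Real.sqrt (c + ((n : ℝ) + d / 2 - 1) ^ 2 + m * (m + d - 2)) := by
    rw [hb]; field_simp
  have hn0 : 0 ≤ (n:ℝ) * ((n:ℝ) + d - 2) := by
    rcases Nat.eq_zero_or_pos n with h | h
    · simp [h]
    · have h1 : (1:ℝ) ≤ (n:ℝ) := by exact_mod_cast h
      nlinarith
  have hR0 : 0 ≤ c + ((n : ℝ) + d / 2 - 1) ^ 2 + m * (m + d - 2) := by
    nlinarith [sq_nonneg (m + d/2 - 1)]
  have htb2 : (t*b)^2 = c + ((n : ℝ) + d / 2 - 1) ^ 2 + m * (m + d - 2) := by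
    rw [hbR]; exact Real.sq_sqrt hR0
  have hzero : (t * b + 1 - d / 2 - m) * ((t * b + 1 - d / 2 - m) - 1)
      + (2*m+d-1) * (t * b + 1 - d / 2 - m) - ((n:ℝ) * ((n:ℝ) + d - 2) + c) = 0 := by
    linear_combination htb2
  -- derivative of u
  set γ : ℝ := t * b + 1 - d / 2 - m with hγ
  set f : ℝ → ℝ := fun s => s ^ γ * jacobiP k a b (2 * s ^ (2 * t) - 1) with hf
  set g : ℝ → ℝ := fun s => γ * s ^ (γ-1) * jacobiP k a b (2 * s ^ (2 * t) - 1)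
      + s ^ γ * (dJ k a b (2 * s ^ (2 * t) - 1) * (2 * (2 * t * s ^ (2 * t - 1)))) with hg
  have hX : ∀ s : ℝ, 0 < s → HasDerivAt (fun s : ℝ => 2 * s ^ (2 * t) - 1)
      (2 * (2 * t * s ^ (2 * t - 1))) s := fun s hs =>
    ((Real.hasDerivAt_rpow_const (Or.inl hs.ne')).const_mul 2).sub_const 1
  have hfd : ∀ s : ℝ, 0 < s → HasDerivAt f (g s) s := by
    intro s hs
    exact (Real.hasDerivAt_rpow_const (Or.inl hs.ne')).mul
      ((hasDerivAt_jacobiP k a b _).comp s (hX s hs))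
  have hud : ∀ s ∈ Set.Ioo (0:ℝ) 1, deriv u s = g s := by
    intro s hs
    have h1 : u =ᶠ[nhds s] f :=
      Filter.eventuallyEq_of_mem (Ioo_mem_nhds hs.1 hs.2) hu
    rw [h1.deriv_eq, (hfd s hs.1).deriv]
  intro r hr
  have hr0 : 0 < r := hr.1
  have hgg : HasDerivAt g
      (γ * ((γ-1) * r ^ (γ-1-1)) * jacobiP k a b (2 * r ^ (2 * t) - 1)
        + γ * r ^ (γ-1) * (dJ k a b (2 * r ^ (2 * t) - 1) * (2 * (2 * t * r ^ (2 * t - 1))))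
        + ((γ * r ^ (γ-1)) * (dJ k a b (2 * r ^ (2 * t) - 1) * (2 * (2 * t * r ^ (2 * t - 1))))
          + r ^ γ * ((ddJ k a b (2 * r ^ (2 * t) - 1) * (2 * (2 * t * r ^ (2 * t - 1))))
              * (2 * (2 * t * r ^ (2 * t - 1)))
            + dJ k a b (2 * r ^ (2 * t) - 1)
              * (2 * (2 * t * ((2*t-1) * r ^ (2*t-1-1))))))) r := by
    refine HasDerivAt.add ?_ ?_
    · exact (((Real.hasDerivAt_rpow_const (Or.inl hr0.ne')).const_mul γ).mul
        ((hasDerivAt_jacobiP k a b _).comp r (hX r hr0)))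
    · refine (Real.hasDerivAt_rpow_const (Or.inl hr0.ne')).mul ?_
      refine HasDerivAt.mul ((hasDerivAt_dJ k a b _).comp r (hX r hr0)) ?_
      exact ((Real.hasDerivAt_rpow_const (Or.inl hr0.ne')).const_mul (2*t)).const_mul 2
  have hud2 : deriv (deriv u) r = deriv g r := by
    have h1 : deriv u =ᶠ[nhds r] g :=
      Filter.eventuallyEq_of_mem (Ioo_mem_nhds hr.1 hr.2) hud
    exact h1.deriv_eq
  rw [hud2, hgg.deriv, hud r hr, hu r hr]
  simp only [hg, hf]
  have hrne : r ≠ 0 := hr0.ne'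
  have hA1 : r ^ (γ-1) = r ^ (γ-2) * r := by
    rw [show γ-1 = (γ-2)+1 by ring, Real.rpow_add hr0, Real.rpow_one]
  have hA2 : r ^ (γ-1-1) = r ^ (γ-2) := by rw [show γ-1-1 = γ-2 by ring]
  have hA0 : r ^ γ = r ^ (γ-2) * r * r := by
    conv_lhs => rw [show γ = (γ-2)+1+1 by ring]
    rw [Real.rpow_add hr0, Real.rpow_add hr0, Real.rpow_one]
  have hP0 : r ^ (2*t) = r ^ (2*t-2) * r * r := by
    conv_lhs => rw [show 2*t = (2*t-2)+1+1 by ring]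
    rw [Real.rpow_add hr0, Real.rpow_add hr0, Real.rpow_one]
  have hP1 : r ^ (2*t-1) = r ^ (2*t-2) * r := by
    rw [show 2*t-1 = (2*t-2)+1 by ring, Real.rpow_add hr0, Real.rpow_one]
  have hP2 : r ^ (2*t-1-1) = r ^ (2*t-2) := by rw [show 2*t-1-1 = 2*t-2 by ring]
  have hP3 : r ^ (2*t-2+2*m) = r ^ (2*m) * r ^ (2*t-2) := by
    rw [show 2*t-2+2*m = 2*m+(2*t-2) by ring, Real.rpow_add hr0]
  have e6 : ((2*m+d-1)/r) * (γ * r ^ (γ-1) * jacobiP k a b (2*r^(2*t)-1)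
        + r ^ γ * (dJ k a b (2*r^(2*t)-1) * (2*(2*t*r^(2*t-1)))))
      = (2*m+d-1) * (γ * r ^ (γ-2) * jacobiP k a b (2*r^(2*t)-1)
        + 4*t*(r^(γ-2)*(r^(2*t-2)*r*r)) * dJ k a b (2*r^(2*t)-1)) := by
    rw [hA1, hA0, hP1, div_mul_eq_mul_div, div_eq_iff hrne]
    ring
  have e7 : (((n:ℝ)*((n:ℝ)+d-2)+c)/r^2) * (r ^ γ * jacobiP k a b (2*r^(2*t)-1))
      = ((n:ℝ)*((n:ℝ)+d-2)+c) * (r^(γ-2) * jacobiP k a b (2*r^(2*t)-1)) := by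
    rw [hA0, div_mul_eq_mul_div, div_eq_iff (pow_ne_zero 2 hrne)]
    ring
  rw [e6, e7, hA1, hA2, hA0, hP2, hP1, hP3, hP0]
  have hkey := key k hk a b (2 * (r ^ (2*t-2) * r * r) - 1)
  linear_combination (-(r^(2*m)) * r^(γ-2) * jacobiP k a b (2*(r^(2*t-2)*r*r)-1)) * hzero
    + (-4*t^2*r^(2*m)*r^(γ-2)*(r^(2*t-2)*r*r)) * hkey
end

section
/- Fix d ≥ 1, μ > -1/2, θ > 0, c > 0, n ≥ 0, α > -1 and β = sqrt(c + (n+d/2-1)² + μ(μ+d-2))/θ. For k ≥ 0, the radial function u(r) = r^{θβ+1-d/2-μ} P_k^{(α,β)}(2r^{2θ}-1) on (0,1) satisfies the Sturm–Liouville equation: -(1/(r^{d+2μ-1}(1-r^{2θ})^α)) d/dr[ r^{d+2μ-1}(1-r^{2θ})^{α+1} u'(r) ] + ((c+n(n+d-2))/r²) u(r) = χ r^{2θ-2} u(r), where χ = (2θk + θβ - μ + 1 - d/2)(2θk + θβ + 2θα + 2θ + μ + d/2 - 1). -/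
open Real MeasureTheory Finset Polynomial

noncomputable def jc (k : ℕ) (a b : ℝ) (j : ℕ) : ℝ :=
  (ascPochhammer ℝ j).eval ((k : ℝ) + a + b + 1) *
      (ascPochhammer ℝ (k - j)).eval (a + (j : ℝ) + 1) /
      ((j.factorial : ℝ) * ((k - j).factorial : ℝ))

lemma jc_rec (k : ℕ) (a b : ℝ) (j : ℕ) (hj : j < k) :
    ((j : ℝ) + 1) * ((j : ℝ) + a + 1) * jc k a b (j + 1) =
      ((k : ℝ) - (j : ℝ)) * ((k : ℝ) + (j : ℝ) + a + b + 1) * jc k a b j := by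
  obtain ⟨i, hi⟩ : ∃ i, k - j = i + 1 := ⟨k - j - 1, by omega⟩
  have hkj : k - (j + 1) = i := by omega
  have hk : k = j + i + 1 := by omega
  have h1 : (ascPochhammer ℝ (j + 1)).eval ((k : ℝ) + a + b + 1)
      = (ascPochhammer ℝ j).eval ((k : ℝ) + a + b + 1) * ((k : ℝ) + a + b + 1 + j) :=
    ascPochhammer_succ_eval ..
  have h2 : (ascPochhammer ℝ (i + 1)).eval (a + (j : ℝ) + 1)
      = (a + (j : ℝ) + 1) * (ascPochhammer ℝ i).eval (a + (j : ℝ) + 1 + 1) := by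
    rw [ascPochhammer_succ_left, eval_mul, eval_X, eval_comp, eval_add, eval_X, eval_one]
  have hki : ((k : ℝ) - (j : ℝ)) = (i : ℝ) + 1 := by
    subst hk; push_cast; ring
  have hfj : ((j + 1).factorial : ℝ) = ((j : ℝ) + 1) * (j.factorial : ℝ) := by
    push_cast [Nat.factorial_succ]; ring
  have hfi : (((i + 1)).factorial : ℝ) = ((i : ℝ) + 1) * (i.factorial : ℝ) := by
    push_cast [Nat.factorial_succ]; ring
  have hfj0 : (j.factorial : ℝ) ≠ 0 := Nat.cast_ne_zero.2 j.factorial_ne_zero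
  have hfi0 : (i.factorial : ℝ) ≠ 0 := Nat.cast_ne_zero.2 i.factorial_ne_zero
  rw [jc, jc, hkj, hi, h1, h2, hki, hfj, hfi]
  have : a + ((j : ℝ) + 1) + 1 = a + (j : ℝ) + 1 + 1 := by ring
  push_cast [this]
  field_simp
  ring

noncomputable def jpoly (k : ℕ) (a b : ℝ) : Polynomial ℝ :=
  ∑ j ∈ Finset.range (k + 1), Polynomial.C (jc k a b j) * Polynomial.X ^ j

lemma jpoly_coeff (k : ℕ) (a b : ℝ) (j : ℕ) :
    (jpoly k a b).coeff j = if j ≤ k then jc k a b j else 0 := by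
  simp only [jpoly, finset_sum_coeff, coeff_C_mul, coeff_X_pow]
  by_cases h : j ≤ k
  · rw [if_pos h, Finset.sum_eq_single j]
    · simp
    · intro i _ hij; simp [hij.symm]
    · intro hj; exact absurd (Finset.mem_range.2 (by omega)) hj
  · rw [if_neg h]
    apply Finset.sum_eq_zero
    intro i hi
    simp only [Finset.mem_range, Nat.lt_succ_iff] at hi
    have : ¬ (j = i) := by omega
    simp [this]

lemma coeff_rec (k : ℕ) (a b : ℝ) (j : ℕ) :
    ((j : ℝ) + 1) * ((j : ℝ) + a + 1) * (jpoly k a b).coeff (j + 1) =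
      ((k : ℝ) - (j : ℝ)) * ((k : ℝ) + (j : ℝ) + a + b + 1) * (jpoly k a b).coeff j := by
  rcases lt_trichotomy j k with h | h | h
  · rw [jpoly_coeff, jpoly_coeff, if_pos (by omega), if_pos (by omega)]
    exact jc_rec k a b j h
  · subst h
    rw [jpoly_coeff, if_neg (by omega)]
    simp
  · rw [jpoly_coeff, jpoly_coeff, if_neg (by omega), if_neg (by omega)]
    simp

lemma jpoly_ode (k : ℕ) (a b : ℝ) :
    derivative (derivative (jpoly k a b)) * Polynomial.X ^ 2 +
      derivative (derivative (jpoly k a b)) * Polynomial.X +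
      Polynomial.C (a + b + 2) * (derivative (jpoly k a b) * Polynomial.X) +
      Polynomial.C (a + 1) * derivative (jpoly k a b) =
    Polynomial.C ((k : ℝ) * ((k : ℝ) + a + b + 1)) * jpoly k a b := by
  have hc := coeff_rec k a b
  ext j
  match j with
  | 0 =>
    simp only [coeff_add, coeff_C_mul, mul_coeff_zero, coeff_X_zero, coeff_derivative,
      coeff_C_zero, mul_zero, zero_add, add_zero, pow_two]
    push_cast
    linear_combination hc 0
  | 1 =>
    simp only [coeff_add, coeff_C_mul, coeff_derivative, pow_two, ← mul_assoc,
      coeff_mul_X, mul_coeff_zero, coeff_X_zero, coeff_C_zero, mul_zero, zero_add]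
    push_cast
    linear_combination hc 1
  | (i+2) =>
    have h2 := hc (i+2)
    simp only [coeff_add, coeff_C_mul, coeff_derivative, pow_two, ← mul_assoc,
      coeff_mul_X, coeff_C_zero, show i + 2 = (i + 1) + 1 from rfl] at h2 ⊢
    push_cast at h2 ⊢
    linear_combination h2

lemma jacobiP_eq_s18 (k : ℕ) (a b x : ℝ) :
    jacobiP k a b x = (jpoly k a b).eval ((x - 1) / 2) := by
  simp [jacobiP, jpoly, jc, eval_finset_sum]

set_option maxHeartbeats 2000000 in
theorem stmt18 (d m t c : ℝ) (hd : 1 ≤ d) (hm : -1/2 < m) (ht : 0 < t) (hc : 0 < c)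
    (n : ℕ) (a : ℝ) (ha : -1 < a)
    (b : ℝ) (hb : b = Real.sqrt (c + ((n : ℝ) + d / 2 - 1) ^ 2 + m * (m + d - 2)) / t)
    (k : ℕ)
    (u : ℝ → ℝ)
    (hu : ∀ r ∈ Set.Ioo (0:ℝ) 1,
      u r = r ^ (t * b + 1 - d / 2 - m) * jacobiP k a b (2 * r ^ (2 * t) - 1))
    (chi : ℝ)
    (hchi : chi = (2 * t * (k : ℝ) + t * b - m + 1 - d / 2) *
        (2 * t * (k : ℝ) + t * b + 2 * t * a + 2 * t + m + d / 2 - 1)) :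
    ∀ r ∈ Set.Ioo (0:ℝ) 1,
      -(1 / (r ^ (d + 2 * m - 1) * (1 - r ^ (2 * t)) ^ a)) *
          deriv (fun s => s ^ (d + 2 * m - 1) * (1 - s ^ (2 * t)) ^ (a + 1) * deriv u s) r +
        ((c + (n : ℝ) * ((n : ℝ) + d - 2)) / r ^ 2) * u r =
      chi * r ^ (2 * t - 2) * u r := by
  subst hchi
  intro r hr
  obtain ⟨hr0, hr1⟩ := hr
  have hrne : r ≠ 0 := ne_of_gt hr0
  have hy0 : (0:ℝ) < r ^ (2*t) := Real.rpow_pos_of_pos hr0 _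
  have hy1 : r ^ (2*t) < 1 := Real.rpow_lt_one hr0.le hr1 (by linarith)
  have hw0 : (0:ℝ) < 1 - r ^ (2*t) := by linarith
  set γ : ℝ := t * b + 1 - d / 2 - m with hγ
  set Q : Polynomial ℝ := jpoly k a b with hQdef
  -- derivative of the model function
  have hU : ∀ s : ℝ, 0 < s →
      HasDerivAt (fun x : ℝ => x ^ γ * Q.eval (x ^ (2*t) - 1))
        (γ * s ^ (γ - 1) * Q.eval (s ^ (2*t) - 1)
          + s ^ γ * ((Polynomial.derivative Q).eval (s ^ (2*t) - 1) * (2*t * s ^ (2*t - 1)))) s := by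
    intro s hs
    have h1 : HasDerivAt (fun x : ℝ => x ^ γ) (γ * s ^ (γ - 1)) s :=
      Real.hasDerivAt_rpow_const (Or.inl (ne_of_gt hs))
    have h2 : HasDerivAt (fun x : ℝ => x ^ (2*t)) (2*t * s ^ (2*t - 1)) s :=
      Real.hasDerivAt_rpow_const (Or.inl (ne_of_gt hs))
    have h3 := h2.sub_const 1
    have h4 : HasDerivAt (fun x : ℝ => Q.eval (x ^ (2*t) - 1))
        ((Polynomial.derivative Q).eval (s ^ (2*t) - 1) * (2*t * s ^ (2*t - 1))) s :=
      (Q.hasDerivAt _).comp s h3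
    exact h1.mul h4
  have hud : ∀ s ∈ Set.Ioo (0:ℝ) 1, deriv u s =
      γ * s ^ (γ - 1) * Q.eval (s ^ (2*t) - 1)
        + s ^ γ * ((Polynomial.derivative Q).eval (s ^ (2*t) - 1) * (2*t * s ^ (2*t - 1))) := by
    intro s hs
    have hev : u =ᶠ[nhds s] (fun x : ℝ => x ^ γ * Q.eval (x ^ (2*t) - 1)) := by
      filter_upwards [isOpen_Ioo.mem_nhds hs] with z hz
      rw [hu z hz, jacobiP_eq_s18]
      have harg : (2 * z ^ (2*t) - 1 - 1) / 2 = z ^ (2*t) - 1 := by ring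
      rw [harg]
    rw [hev.deriv_eq, (hU s hs.1).deriv]
  -- derivative of the flux function
  have h2r : HasDerivAt (fun x : ℝ => x ^ (2*t)) (2*t * r ^ (2*t - 1)) r :=
    Real.hasDerivAt_rpow_const (Or.inl hrne)
  have h3r := h2r.sub_const 1
  have hB : HasDerivAt (fun x : ℝ => Q.eval (x ^ (2*t) - 1))
      ((Polynomial.derivative Q).eval (r ^ (2*t) - 1) * (2*t * r ^ (2*t - 1))) r :=
    (Q.hasDerivAt _).comp r h3r
  have hB' : HasDerivAt (fun x : ℝ => (Polynomial.derivative Q).eval (x ^ (2*t) - 1))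
      ((Polynomial.derivative (Polynomial.derivative Q)).eval (r ^ (2*t) - 1) * (2*t * r ^ (2*t - 1))) r :=
    ((Polynomial.derivative Q).hasDerivAt _).comp r h3r
  have hA : HasDerivAt (fun x : ℝ => γ * x ^ (γ - 1)) (γ * ((γ - 1) * r ^ (γ - 1 - 1))) r :=
    (Real.hasDerivAt_rpow_const (Or.inl hrne)).const_mul γ
  have hC := hA.mul hB
  have hE : HasDerivAt (fun x : ℝ => 2*t * x ^ (2*t - 1)) (2*t * ((2*t - 1) * r ^ (2*t - 1 - 1))) r :=
    (Real.hasDerivAt_rpow_const (Or.inl hrne)).const_mul (2*t)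
  have hF := hB'.mul hE
  have hG : HasDerivAt (fun x : ℝ => x ^ γ) (γ * r ^ (γ - 1)) r :=
    Real.hasDerivAt_rpow_const (Or.inl hrne)
  have hH := hG.mul hF
  have hD := hC.add hH
  have hA2 : HasDerivAt (fun x : ℝ => x ^ (d + 2*m - 1)) ((d + 2*m - 1) * r ^ (d + 2*m - 1 - 1)) r :=
    Real.hasDerivAt_rpow_const (Or.inl hrne)
  have hWin : HasDerivAt (fun x : ℝ => 1 - x ^ (2*t)) (-(2*t * r ^ (2*t - 1))) r := h2r.const_sub 1
  have hW : HasDerivAt (fun x : ℝ => (1 - x ^ (2*t)) ^ (a + 1))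
      (-(2*t * r ^ (2*t - 1)) * (a + 1) * (1 - r ^ (2*t)) ^ (a + 1 - 1)) r :=
    hWin.rpow_const (Or.inl (ne_of_gt hw0))
  have hFull := (hA2.mul hW).mul hD
  have hevF : (fun s => s ^ (d + 2*m - 1) * (1 - s ^ (2*t)) ^ (a + 1) * deriv u s)
      =ᶠ[nhds r] (fun s => s ^ (d + 2*m - 1) * (1 - s ^ (2*t)) ^ (a + 1) *
        (γ * s ^ (γ - 1) * Q.eval (s ^ (2*t) - 1)
          + s ^ γ * ((Polynomial.derivative Q).eval (s ^ (2*t) - 1) * (2*t * s ^ (2*t - 1))))) := by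
    filter_upwards [isOpen_Ioo.mem_nhds (Set.mem_Ioo.mpr ⟨hr0, hr1⟩)] with s hs
    rw [hud s hs]
  have hdF := hevF.deriv_eq.trans hFull.deriv
  rw [show (2:ℝ) * t = 2*t from rfl] at hdF
  simp only [Pi.mul_apply, Pi.add_apply] at hdF
  rw [hdF, hu r ⟨hr0, hr1⟩, jacobiP_eq_s18]
  have harg : (2 * r ^ (2*t) - 1 - 1) / 2 = r ^ (2*t) - 1 := by ring
  rw [harg]
  have e3 : r ^ (γ - 1 - 1) = r ^ γ / r / r := by
    rw [Real.rpow_sub hr0, Real.rpow_sub hr0, Real.rpow_one]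
  have e2 : r ^ (γ - 1) = r ^ γ / r := by rw [Real.rpow_sub hr0, Real.rpow_one]
  have e5 : r ^ (2*t - 1 - 1) = r ^ (2*t) / r / r := by
    rw [Real.rpow_sub hr0, Real.rpow_sub hr0, Real.rpow_one]
  have e4 : r ^ (2*t - 1) = r ^ (2*t) / r := by rw [Real.rpow_sub hr0, Real.rpow_one]
  have e1 : r ^ (d + 2*m - 1 - 1) = r ^ (d + 2*m - 1) / r := by
    rw [Real.rpow_sub hr0, Real.rpow_one]
  have e6 : r ^ (2*t - 2) = r ^ (2*t) / r ^ 2 := by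
    rw [show (2*t - 2 : ℝ) = 2*t - ((2:ℕ):ℝ) by norm_num, Real.rpow_sub hr0, Real.rpow_natCast]
  have e7 : (1 - r ^ (2*t)) ^ (a + 1 - 1) = (1 - r ^ (2*t)) ^ a := by norm_num
  have e8 : (1 - r ^ (2*t)) ^ (a + 1) = (1 - r ^ (2*t)) ^ a * (1 - r ^ (2*t)) :=
    Real.rpow_add_one (ne_of_gt hw0) a
  rw [e3, e2, e5, e4, e1, e6, e7, e8]
  have hkey : (Polynomial.derivative (Polynomial.derivative Q)).eval (r^(2*t) - 1) * (r^(2*t) - 1)^2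
      + (Polynomial.derivative (Polynomial.derivative Q)).eval (r^(2*t) - 1) * (r^(2*t) - 1)
      + (a + b + 2) * ((Polynomial.derivative Q).eval (r^(2*t) - 1) * (r^(2*t) - 1))
      + (a + 1) * (Polynomial.derivative Q).eval (r^(2*t) - 1)
      = (k:ℝ) * ((k:ℝ) + a + b + 1) * Q.eval (r^(2*t) - 1) := by
    have h := congrArg (Polynomial.eval (r^(2*t) - 1)) (jpoly_ode k a b)
    rw [← hQdef] at h
    simpa using h
  have hn0 : 0 ≤ (n:ℝ) * ((n:ℝ) + d - 2) := by
    rcases Nat.eq_zero_or_pos n with h0 | h0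
    · simp [h0]
    · have h1 : (1:ℝ) ≤ (n:ℝ) := by exact_mod_cast h0
      exact mul_nonneg (by linarith) (by linarith)
  have hrad : 0 ≤ c + ((n:ℝ) + d/2 - 1)^2 + m * (m + d - 2) := by
    have hre : c + ((n:ℝ) + d/2 - 1)^2 + m * (m + d - 2)
        = c + (n:ℝ) * ((n:ℝ) + d - 2) + (d/2 - 1 + m)^2 := by ring
    rw [hre]
    have := sq_nonneg (d/2 - 1 + m)
    linarith
  have hb2 : (t*b)^2 = c + ((n:ℝ) + d/2 - 1)^2 + m * (m + d - 2) := by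
    rw [hb]
    rw [show t * (Real.sqrt (c + ((n:ℝ) + d/2 - 1)^2 + m * (m + d - 2)) / t)
        = Real.sqrt (c + ((n:ℝ) + d/2 - 1)^2 + m * (m + d - 2)) by
      rw [mul_div_assoc']
      exact mul_div_cancel_left₀ _ (ne_of_gt ht)]
    exact Real.sq_sqrt hrad
  have hRP : r ^ (d + 2*m - 1) ≠ 0 := ne_of_gt (Real.rpow_pos_of_pos hr0 _)
  have hWA : (1 - r ^ (2*t)) ^ a ≠ 0 := ne_of_gt (Real.rpow_pos_of_pos hw0 _)
  have hRG : r ^ γ ≠ 0 := ne_of_gt (Real.rpow_pos_of_pos hr0 _)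
  rw [← hQdef]
  field_simp
  linear_combination (16*t^2*r^(2*t)) * hkey
    - (4 * Polynomial.eval (r^(2*t)-1) Q) * hb2
end
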